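/- For every L > 0 and all fixed k, n ∈ ℕ: ∫_{C_n(L) ∩ [k, ∞)} (r^k/k!) e^{-r} dr ≤ ∫_{C_n(L) + k} (r^k/k!) e^{-r} dr, where C_n(L) + k = {x + k : x ∈ C_n(L)}. -/

import Mathlib

open Real MeasureTheory

/-- The `n`-iterate mid-third Cantor set based in `[0, L]`:
`C₀(L) = [0,L]` and `C_{n+1}(L) = (1/3)·C_n(L) ∪ (2L/3 + (1/3)·C_n(L))`. -/
def cantorIterate : ℕ → ℝ → Set ℝ
  | 0, L => Set.Icc 0 L
  | n + 1, L =>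
      (fun x => x / 3) '' cantorIterate n L ∪
        (fun x => 2 * L / 3 + x / 3) '' cantorIterate n L

namespace CantorTailAux

open Set

lemma cantorIterate_subset (n : ℕ) (L : ℝ) (hL : 0 ≤ L) : cantorIterate n L ⊆ Set.Icc 0 L := by
  induction n with
  | zero => exact subset_rfl
  | succ n ih =>
    rintro x (⟨y, hy, rfl⟩ | ⟨y, hy, rfl⟩) <;> obtain ⟨h1, h2⟩ := ih hy <;>
      constructor <;> nlinarith

lemma cantorIterate_isCompact (n : ℕ) (L : ℝ) : IsCompact (cantorIterate n L) := by
  induction n with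
  | zero => exact isCompact_Icc
  | succ n ih =>
    exact (ih.image (by fun_prop)).union (ih.image (by fun_prop))

lemma vol_img1 (S : Set ℝ) :
    volume ((fun x : ℝ => x / 3) '' S) = ENNReal.ofReal (1/3) * volume S := by
  have h : (fun x : ℝ => x / 3) = fun x => AffineMap.homothety (0:ℝ) (1/3 : ℝ) x := by
    funext x; simp [AffineMap.homothety_apply]; ring
  rw [h, MeasureTheory.Measure.addHaar_image_homothety,
    abs_of_nonneg (by norm_num : (0:ℝ) ≤ (1/3:ℝ)^(Module.finrank ℝ ℝ)), Module.finrank_self,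
    pow_one]

lemma vol_img2 (L : ℝ) (S : Set ℝ) :
    volume ((fun x : ℝ => 2 * L / 3 + x / 3) '' S) = ENNReal.ofReal (1/3) * volume S := by
  have h : (fun x : ℝ => 2 * L / 3 + x / 3) = fun x => AffineMap.homothety (L:ℝ) (1/3 : ℝ) x := by
    funext x; simp [AffineMap.homothety_apply]; ring
  rw [h, MeasureTheory.Measure.addHaar_image_homothety,
    abs_of_nonneg (by norm_num : (0:ℝ) ≤ (1/3:ℝ)^(Module.finrank ℝ ℝ)), Module.finrank_self,
    pow_one]

variable {L : ℝ} {C : Set ℝ}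

lemma m_zero (hCsub : C ⊆ Icc 0 L) {x y : ℝ} (hy : y ≤ 0) : volume (C ∩ Icc x y) = 0 := by
  apply measure_mono_null (t := {(0:ℝ)}) _ Real.volume_singleton
  rintro c ⟨hc, h1, h2⟩
  have := (hCsub hc).1
  simp only [mem_singleton_iff]; linarith

lemma m_left (hCsub : C ⊆ Icc 0 L) {x : ℝ} (hx : x ≤ 0) (y : ℝ) :
    C ∩ Icc x y = C ∩ Icc 0 y := by
  ext c
  simp only [mem_inter_iff, mem_Icc]
  constructor <;> rintro ⟨hc, h1, h2⟩ <;> exact ⟨hc, by linarith [(hCsub hc).1], h2⟩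

lemma m_high (hCsub : C ⊆ Icc 0 L) {x y : ℝ} (hx : L < x) : volume (C ∩ Icc x y) = 0 := by
  apply measure_mono_null (t := (∅ : Set ℝ)) _ measure_empty
  rintro c ⟨hc, h1, h2⟩
  have := (hCsub hc).2
  exact absurd h1 (not_le.2 (lt_of_le_of_lt this hx))

lemma m_full (hCsub : C ⊆ Icc 0 L) {y : ℝ} (hy : L ≤ y) : C ∩ Icc 0 y = C :=
  Set.inter_eq_self_of_subset_left (hCsub.trans (Icc_subset_Icc_right hy))

lemma m_split (hCm : MeasurableSet C) {x y z : ℝ} (hxz : x ≤ z) (hzy : z ≤ y) :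
    volume (C ∩ Icc x y) = volume (C ∩ Icc x z) + volume (C ∩ Ioc z y) := by
  rw [← Set.Icc_union_Ioc_eq_Icc hxz hzy, Set.inter_union_distrib_left]
  apply measure_union _ (hCm.inter measurableSet_Ioc)
  rw [Set.disjoint_left]
  rintro c ⟨-, -, h2⟩ ⟨-, h3, -⟩
  linarith

lemma cantor_core (hL : 0 < L) (hCm : MeasurableSet C) (hCsub : C ⊆ Icc 0 L)
    (ih : ∀ a b : ℝ, 0 ≤ a → volume (C ∩ Icc a b) ≤ volume (C ∩ Icc 0 (b - a)))
    (α β : ℝ) (hα : 0 ≤ α) :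
    volume (C ∩ Icc α β) + volume (C ∩ Icc (α - 2*L) (β - 2*L)) ≤
      volume (C ∩ Icc 0 (β - α)) + volume (C ∩ Icc (-(2*L)) (β - α - 2*L)) := by
  rw [m_left hCsub (by linarith : -(2*L) ≤ 0)]
  rcases le_or_gt (β - 2*L) 0 with h1 | h1
  · rw [m_zero hCsub h1, add_zero]
    exact le_add_right (ih α β hα)
  · rcases le_or_gt (2*L) α with h2 | h2
    · rw [m_high hCsub (by linarith : L < α), zero_add]
      have h := ih (α - 2*L) (β - 2*L) (by linarith)
      rw [show β - 2*L - (α - 2*L) = β - α by ring] at h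
      exact le_add_right h
    · rw [m_left hCsub (by linarith : α - 2*L ≤ 0)]
      rcases le_or_gt (2*L) (β - α) with h3 | h3
      · -- overlap case: σ ≥ 2L
        rw [m_split hCm (by linarith : α ≤ β - 2*L) (by linarith : β - 2*L ≤ β)]
        have hA : volume (C ∩ Icc α (β - 2*L)) ≤ volume (C ∩ Icc 0 (β - α - 2*L)) := by
          have h := ih α (β - 2*L) hα
          rwa [show β - 2*L - α = β - α - 2*L by ring] at h
        have hB : volume (C ∩ Ioc (β - 2*L) β) + volume (C ∩ Icc 0 (β - 2*L)) ≤
            volume (C ∩ Icc 0 (β - α)) := by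
          rw [m_full hCsub (by linarith : L ≤ β - α),
            ← measure_union _ (hCm.inter measurableSet_Icc)]
          · exact measure_mono (by rintro c (⟨hc,-⟩|⟨hc,-⟩) <;> exact hc)
          · rw [Set.disjoint_left]
            rintro c ⟨-, h4, -⟩ ⟨-, -, h5⟩
            linarith
        calc volume (C ∩ Icc α (β - 2*L)) + volume (C ∩ Ioc (β - 2*L) β) +
              volume (C ∩ Icc 0 (β - 2*L))
            ≤ volume (C ∩ Icc 0 (β - α - 2*L)) +
              (volume (C ∩ Ioc (β - 2*L) β) + volume (C ∩ Icc 0 (β - 2*L))) := by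
              rw [add_assoc]; exact add_le_add hA le_rfl
          _ ≤ volume (C ∩ Icc 0 (β - α - 2*L)) + volume (C ∩ Icc 0 (β - α)) :=
              add_le_add le_rfl hB
          _ = volume (C ∩ Icc 0 (β - α)) + volume (C ∩ Icc 0 (β - α - 2*L)) := add_comm _ _
      · -- separated case: σ < 2L
        apply le_add_right
        rw [m_split hCm (le_of_lt h1) (by linarith : β - 2*L ≤ β - α), add_comm]
        apply add_le_add le_rfl
        rcases le_or_gt L (β - α) with h4 | h4
        · apply measure_mono
          rintro c ⟨hc, h5, h6⟩
          exact ⟨hc, by linarith, by linarith [(hCsub hc).2]⟩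
        · rw [m_high hCsub (by linarith : L < α)]
          exact zero_le

lemma cantor_window (L : ℝ) (hL : 0 < L) (n : ℕ) :
    ∀ a b : ℝ, 0 ≤ a →
      volume (cantorIterate n L ∩ Set.Icc a b) ≤
        volume (cantorIterate n L ∩ Set.Icc 0 (b - a)) := by
  induction n with
  | zero =>
    intro a b ha
    show volume (Icc 0 L ∩ Icc a b) ≤ volume (Icc 0 L ∩ Icc 0 (b - a))
    rw [Set.Icc_inter_Icc, Set.Icc_inter_Icc, Real.volume_Icc, Real.volume_Icc]
    apply ENNReal.ofReal_le_ofReal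
    simp only [max_self, max_eq_right ha]
    rcases le_total L b with h | h <;> rcases le_total L (b - a) with h' | h' <;>
      simp [min_eq_left, min_eq_right, *] <;> linarith
  | succ n ih =>
    intro a b ha
    set C := cantorIterate n L with hCdef
    have hCm : MeasurableSet C := (cantorIterate_isCompact n L).measurableSet
    have hCsub : C ⊆ Icc 0 L := cantorIterate_subset n L hL.le
    have him1 : ∀ u v : ℝ, (fun x : ℝ => x/3) '' C ∩ Icc u v
        = (fun x : ℝ => x/3) '' (C ∩ Icc (3*u) (3*v)) := by
      intro u v
      have hpre : (fun x : ℝ => x/3) ⁻¹' Icc u v = Icc (3*u) (3*v) := by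
        ext x
        simp only [mem_preimage, mem_Icc]
        constructor <;> rintro ⟨h1, h2⟩ <;> constructor <;> linarith
      rw [← Set.image_inter_preimage, hpre]
    have him2 : ∀ u v : ℝ, (fun x : ℝ => 2*L/3 + x/3) '' C ∩ Icc u v
        = (fun x : ℝ => 2*L/3 + x/3) '' (C ∩ Icc (3*u - 2*L) (3*v - 2*L)) := by
      intro u v
      have hpre : (fun x : ℝ => 2*L/3 + x/3) ⁻¹' Icc u v = Icc (3*u - 2*L) (3*v - 2*L) := by
        ext x
        simp only [mem_preimage, mem_Icc]
        constructor <;> rintro ⟨h1, h2⟩ <;> constructor <;> linarith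
      rw [← Set.image_inter_preimage, hpre]
    have hCsucc : cantorIterate (n+1) L
        = (fun x : ℝ => x/3) '' C ∪ (fun x : ℝ => 2*L/3 + x/3) '' C := rfl
    have hdisj : ∀ u v : ℝ, Disjoint ((fun x : ℝ => x/3) '' C ∩ Icc u v)
        ((fun x : ℝ => 2*L/3 + x/3) '' C ∩ Icc u v) := by
      intro u v
      rw [Set.disjoint_left]
      rintro z ⟨⟨x, hx, rfl⟩, -⟩ ⟨⟨y, hy, hyz⟩, -⟩
      have h1 := (hCsub hx).2
      have h2 := (hCsub hy).1
      have : 2*L/3 + y/3 = x/3 := hyz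
      nlinarith
    have hmeas2 : ∀ u v : ℝ, MeasurableSet ((fun x : ℝ => 2*L/3 + x/3) '' C ∩ Icc u v) :=
      fun u v => (((cantorIterate_isCompact n L).image (by fun_prop)).measurableSet).inter
        measurableSet_Icc
    have key : ∀ u v : ℝ, volume (cantorIterate (n+1) L ∩ Icc u v)
        = ENNReal.ofReal (1/3) *
          (volume (C ∩ Icc (3*u) (3*v)) + volume (C ∩ Icc (3*u - 2*L) (3*v - 2*L))) := by
      intro u v
      rw [hCsucc, Set.union_inter_distrib_right,
        measure_union (hdisj u v) (hmeas2 u v), him1, him2, vol_img1, vol_img2, mul_add]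
    rw [key a b, key 0 (b - a)]
    refine mul_le_mul_of_nonneg_left ?_ (by positivity)
    have h := cantor_core hL hCm hCsub ih (3*a) (3*b) (by linarith)
    calc volume (C ∩ Icc (3*a) (3*b)) + volume (C ∩ Icc (3*a - 2*L) (3*b - 2*L))
        ≤ volume (C ∩ Icc 0 (3*b - 3*a)) + volume (C ∩ Icc (-(2*L)) (3*b - 3*a - 2*L)) := h
      _ = volume (C ∩ Icc (3*0) (3*(b-a))) + volume (C ∩ Icc (3*0 - 2*L) (3*(b-a) - 2*L)) := by
          norm_num; ring_nf

lemma f_antitone (k : ℕ) :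
    AntitoneOn (fun r : ℝ => r ^ k / (Nat.factorial k) * Real.exp (-r)) (Ici (k:ℝ)) := by
  have hderiv : ∀ x : ℝ, HasDerivAt (fun r : ℝ => r ^ k / (Nat.factorial k) * Real.exp (-r))
      ((↑k * x ^ (k-1) / (Nat.factorial k)) * Real.exp (-x)
        + x ^ k / (Nat.factorial k) * (Real.exp (-x) * (-1))) x := by
    intro x
    exact ((hasDerivAt_pow k x).div_const _).mul
      ((Real.hasDerivAt_exp (-x)).comp x (hasDerivAt_neg x))
  apply antitoneOn_of_deriv_nonpos (convex_Ici _)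
  · fun_prop
  · intro x _
    exact (hderiv x).differentiableAt.differentiableWithinAt
  · intro x hx
    rw [interior_Ici] at hx
    rw [(hderiv x).deriv]
    have hx0 : (0:ℝ) ≤ x := le_trans (Nat.cast_nonneg k) hx.le
    have hexp := (Real.exp_pos (-x)).le
    have hfac : (0:ℝ) < (Nat.factorial k : ℝ) := by positivity
    rcases Nat.eq_zero_or_pos k with rfl | hk
    · simp
      positivity
    · have hk1 : x ^ k = x ^ (k-1) * x := by
        rw [← pow_succ, Nat.sub_add_cancel hk]
      have hpw : (0:ℝ) ≤ x ^ (k-1) := pow_nonneg hx0 _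
      rw [hk1]
      have hkx : (k:ℝ) ≤ x := hx.le
      have heq : (↑k * x ^ (k-1) / (Nat.factorial k)) * Real.exp (-x)
          + x ^ (k-1) * x / (Nat.factorial k) * (Real.exp (-x) * (-1))
          = (x ^ (k-1) * Real.exp (-x) / (Nat.factorial k)) * ((k:ℝ) - x) := by ring
      rw [heq]
      apply mul_nonpos_of_nonneg_of_nonpos
      · positivity
      · linarith

end CantorTailAux

open CantorTailAux Set

/-- For every `L > 0` and `k, n ∈ ℕ`:
`∫_{C_n(L) ∩ [k,∞)} f_k(r) dr ≤ ∫_{C_n(L)+k} f_k(r) dr`. -/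
theorem cantor_integral_right_tail_le_shifted (L : ℝ) (hL : 0 < L) (k n : ℕ) :
    (∫ r in cantorIterate n L ∩ Set.Ici (k : ℝ),
        r ^ k / (Nat.factorial k) * Real.exp (-r)) ≤
      ∫ r in (fun x : ℝ => x + (k : ℝ)) '' cantorIterate n L,
        r ^ k / (Nat.factorial k) * Real.exp (-r) := by
  set C := cantorIterate n L with hCdef
  set f : ℝ → ℝ := fun r => r ^ k / (Nat.factorial k) * Real.exp (-r) with hfdef
  set A := C ∩ Set.Ici (k:ℝ) with hAdef
  set B := (fun x : ℝ => x + (k:ℝ)) '' C with hBdef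
  have hCcomp := cantorIterate_isCompact n L
  have hCm : MeasurableSet C := hCcomp.measurableSet
  have hCsub : C ⊆ Icc 0 L := cantorIterate_subset n L hL.le
  have hAm : MeasurableSet A := hCm.inter measurableSet_Ici
  have hBcomp : IsCompact B := hCcomp.image (by fun_prop)
  have hBm : MeasurableSet B := hBcomp.measurableSet
  have hfc : Continuous f := by fun_prop
  have hfm : Measurable f := hfc.measurable
  have hk0 : (0:ℝ) ≤ (k:ℝ) := Nat.cast_nonneg k
  have hf0 : ∀ r : ℝ, (k:ℝ) ≤ r → 0 ≤ f r := fun r hr =>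
    mul_nonneg (div_nonneg (pow_nonneg (le_trans hk0 hr) _) (Nat.cast_nonneg _))
      (Real.exp_pos _).le
  have hAsub : A ⊆ Ici (k:ℝ) := inter_subset_right
  have hBsub : B ⊆ Ici (k:ℝ) := by
    rintro _ ⟨x, hx, rfl⟩
    have := (hCsub hx).1
    simp only [mem_Ici]; linarith
  -- rewrite both sides as toReal of lintegrals
  have hint : ∀ s : Set ℝ, MeasurableSet s → s ⊆ Ici (k:ℝ) →
      (∫ r in s, f r) = (∫⁻ r in s, ENNReal.ofReal (f r)).toReal := by
    intro s hs hsub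
    rw [MeasureTheory.integral_eq_lintegral_of_nonneg_ae]
    · exact ae_restrict_of_forall_mem hs fun x hx => hf0 x (hsub hx)
    · exact hfc.aestronglyMeasurable.restrict
  rw [hint A hAm hAsub, hint B hBm hBsub]
  -- finiteness of the RHS
  have hBvol : volume B < ⊤ := hBcomp.measure_lt_top
  have hfin : (∫⁻ r in B, ENNReal.ofReal (f r)) ≠ ⊤ := by
    have hbd : ∀ r ∈ B, ENNReal.ofReal (f r)
        ≤ ENNReal.ofReal ((L + k) ^ k / (Nat.factorial k)) := by
      intro r hr
      apply ENNReal.ofReal_le_ofReal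
      obtain ⟨x, hx, rfl⟩ := hr
      obtain ⟨h1, h2⟩ := hCsub hx
      show (x + (k:ℝ)) ^ k / (Nat.factorial k) * Real.exp (-(x + k))
          ≤ (L + (k:ℝ)) ^ k / (Nat.factorial k)
      calc (x + (k:ℝ)) ^ k / (Nat.factorial k) * Real.exp (-(x + k))
          ≤ (x + (k:ℝ)) ^ k / (Nat.factorial k) * 1 := by
            apply mul_le_mul_of_nonneg_left (Real.exp_le_one_iff.2 (by linarith)) _
            positivity
        _ ≤ (L + (k:ℝ)) ^ k / (Nat.factorial k) := by
            rw [mul_one]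
            gcongr <;> linarith
    refine ne_of_lt (lt_of_le_of_lt (setLIntegral_mono measurable_const hbd) ?_)
    rw [setLIntegral_const]
    exact ENNReal.mul_lt_top ENNReal.ofReal_lt_top hBvol
  apply ENNReal.toReal_mono hfin
  -- layer cake on both sides
  have hnnA : 0 ≤ᵐ[volume.restrict A] f :=
    ae_restrict_of_forall_mem hAm fun x hx => hf0 x (hAsub hx)
  have hnnB : 0 ≤ᵐ[volume.restrict B] f :=
    ae_restrict_of_forall_mem hBm fun x hx => hf0 x (hBsub hx)
  rw [MeasureTheory.lintegral_eq_lintegral_meas_lt _ hnnA hfm.aemeasurable,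
      MeasureTheory.lintegral_eq_lintegral_meas_lt _ hnnB hfm.aemeasurable]
  have hSmeas : ∀ t : ℝ, MeasurableSet {r : ℝ | t < f r} :=
    fun t => measurableSet_lt measurable_const hfm
  apply setLIntegral_mono
  · apply Antitone.measurable
    intro t1 t2 h12
    apply measure_mono
    intro r hr
    exact lt_of_le_of_lt h12 hr
  · intro t ht
    rw [Measure.restrict_apply (hSmeas t), Measure.restrict_apply (hSmeas t)]
    set T := {r : ℝ | t < f r} ∩ Ici (k:ℝ) with hT
    rcases T.eq_empty_or_nonempty with hTe | hTne
    · have hsub : {r : ℝ | t < f r} ∩ A ⊆ T := fun r hr => ⟨hr.1, hAsub hr.2⟩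
      rw [hTe] at hsub
      rw [measure_mono_null hsub measure_empty]
      exact zero_le
    · -- T is nonempty; it is bounded above since f → 0 at infinity
      have htend : Filter.Tendsto f Filter.atTop (nhds 0) := by
        have h := tendsto_pow_mul_exp_neg_atTop_nhds_zero k
        have heq : f = fun x : ℝ => (x ^ k * Real.exp (-x)) / (Nat.factorial k) := by
          funext x; rw [hfdef]; ring
        rw [heq]
        simpa using h.div_const (Nat.factorial k : ℝ)
      have hev : ∀ᶠ x in Filter.atTop, f x < t := htend.eventually_lt_const ht
      obtain ⟨M, hM⟩ := Filter.eventually_atTop.1 hev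
      have hbdd : BddAbove T := by
        refine ⟨M, fun x hx => ?_⟩
        by_contra hc
        push_neg at hc
        exact absurd hx.1 (not_lt.2 (hM x hc.le).le)
      set u := sSup T with hu
      obtain ⟨y, hyT⟩ := hTne
      have hyu : y ≤ u := le_csSup hbdd hyT
      have hku : (k:ℝ) ≤ u := le_trans hyT.2 hyu
      have hsub1 : {r : ℝ | t < f r} ∩ A ⊆ C ∩ Icc (k:ℝ) u := by
        rintro r ⟨h1, h2, h3⟩
        exact ⟨h2, h3, le_csSup hbdd ⟨h1, h3⟩⟩
      have hanti := f_antitone k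
      have hsub2 : B ∩ Ico (k:ℝ) u ⊆ {r : ℝ | t < f r} ∩ B := by
        rintro r ⟨h1, h2, h3⟩
        refine ⟨?_, h1⟩
        obtain ⟨z, hzT, hrz⟩ := exists_lt_of_lt_csSup ⟨y, hyT⟩ h3
        exact lt_of_lt_of_le hzT.1 (hanti (mem_Ici.2 h2) hzT.2 hrz.le)
      have himg : B ∩ Icc (k:ℝ) u = (fun x : ℝ => x + (k:ℝ)) '' (C ∩ Icc 0 (u - k)) := by
        have hpre : (fun x : ℝ => x + (k:ℝ)) ⁻¹' Icc (k:ℝ) u = Icc 0 (u - k) := by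
          ext x
          simp only [mem_preimage, mem_Icc]
          constructor <;> rintro ⟨ha, hb⟩ <;> constructor <;> linarith
        rw [hBdef, ← Set.image_inter_preimage, hpre]
      have hvolB : volume (B ∩ Icc (k:ℝ) u) = volume (C ∩ Icc 0 (u - k)) := by
        have hpr : (fun x : ℝ => x + (k:ℝ)) '' (C ∩ Icc 0 (u - k))
            = (fun x : ℝ => x + (-(k:ℝ))) ⁻¹' (C ∩ Icc 0 (u - k)) := by
          ext z
          simp only [mem_image, mem_preimage]
          constructor
          · rintro ⟨x, hx, rfl⟩
            simpa using hx
          · intro h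
            exact ⟨z + -(k:ℝ), h, by ring⟩
        rw [himg, hpr, measure_preimage_add_right]
      calc volume ({r : ℝ | t < f r} ∩ A)
          ≤ volume (C ∩ Icc (k:ℝ) u) := measure_mono hsub1
        _ ≤ volume (C ∩ Icc 0 (u - k)) := cantor_window L hL n (k:ℝ) u hk0
        _ = volume (B ∩ Icc (k:ℝ) u) := hvolB.symm
        _ ≤ volume ((B ∩ Ico (k:ℝ) u) ∪ {u}) := by
            apply measure_mono
            rintro r ⟨h1, h2, h3⟩
            rcases lt_or_eq_of_le h3 with h4 | rfl
            · exact Or.inl ⟨h1, h2, h4⟩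
            · exact Or.inr rfl
        _ ≤ volume (B ∩ Ico (k:ℝ) u) + volume {u} := measure_union_le _ _
        _ = volume (B ∩ Ico (k:ℝ) u) := by rw [Real.volume_singleton, add_zero]
        _ ≤ volume ({r : ℝ | t < f r} ∩ B) := measure_mono hsub2
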